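/- arXiv:2305.19887 — 7 statements merged into one kernel-verified Lean document; each statement's English description precedes it below -/
import Mathlib

section
/- The function ρ is continuous on the open positive quadrant {(x,y) : x > 0, y > 0}. -/
noncomputable def rho (x y : ℝ) : ℝ :=
  if x = y then x else x * y * (Real.log x - Real.log y) / (x - y)

open Real Filter Asymptotics Topology Set

lemma rho_tendsto_diag {a : ℝ} (ha : 0 < a) :
    Tendsto (fun p : ℝ × ℝ => rho p.1 p.2) (𝓝 (a, a)) (𝓝 a) := by
  have hs : HasStrictDerivAt Real.log a⁻¹ a := Real.hasStrictDerivAt_log ha.ne'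
  have hlo := hasDerivAtFilter_iff_isLittleO.mp hs
  simp only [ContinuousLinearMap.smulRight_apply, ContinuousLinearMap.one_apply,
    smul_eq_mul] at hlo
  have hq : Tendsto (fun p : ℝ × ℝ =>
      (Real.log p.1 - Real.log p.2 - (p.1 - p.2) * a⁻¹) / (p.1 - p.2)) (𝓝 (a, a)) (𝓝 0) :=
    hlo.tendsto_div_nhds_zero
  set q : ℝ × ℝ → ℝ := fun p =>
    (Real.log p.1 - Real.log p.2 - (p.1 - p.2) * a⁻¹) / (p.1 - p.2) with hqdef
  have hh : Tendsto (fun p : ℝ × ℝ => p.1 * p.2 * (a⁻¹ + q p)) (𝓝 (a, a)) (𝓝 a) := by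
    have : Tendsto (fun p : ℝ × ℝ => p.1 * p.2 * (a⁻¹ + q p)) (𝓝 (a, a))
        (𝓝 (a * a * (a⁻¹ + 0))) := by
      exact ((continuous_fst.mul continuous_snd).tendsto _).mul
        (tendsto_const_nhds.add hq)
    simpa [mul_assoc, mul_inv_cancel₀ ha.ne'] using this
  have hdecomp : (𝓝 (a, a) : Filter (ℝ × ℝ)) =
      𝓝[{p : ℝ × ℝ | p.1 = p.2}] (a, a) ⊔ 𝓝[{p : ℝ × ℝ | p.1 = p.2}ᶜ] (a, a) := by
    rw [← nhdsWithin_union, Set.union_compl_self, nhdsWithin_univ]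
  rw [hdecomp, tendsto_sup]
  constructor
  · have heq : ∀ p ∈ {p : ℝ × ℝ | p.1 = p.2}, rho p.1 p.2 = p.1 := by
      intro p hp; simp [rho, hp.out]
    refine Tendsto.congr' ?_ ((continuous_fst.tendsto _).mono_left nhdsWithin_le_nhds)
    filter_upwards [self_mem_nhdsWithin] with p hp using (heq p hp).symm
  · have heq : ∀ p ∈ {p : ℝ × ℝ | p.1 = p.2}ᶜ, rho p.1 p.2 = p.1 * p.2 * (a⁻¹ + q p) := by
      intro p hp
      have hne : p.1 ≠ p.2 := hp
      have hsub : p.1 - p.2 ≠ 0 := sub_ne_zero.mpr hne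
      simp only [rho, if_neg hne, hqdef]
      field_simp
      ring
    refine Tendsto.congr' ?_ (hh.mono_left nhdsWithin_le_nhds)
    filter_upwards [self_mem_nhdsWithin] with p hp using (heq p hp).symm

theorem rho_continuousOn :
    ContinuousOn (fun p : ℝ × ℝ => rho p.1 p.2)
      {p : ℝ × ℝ | 0 < p.1 ∧ 0 < p.2} := by
  intro p hp
  obtain ⟨h1, h2⟩ := hp
  by_cases hd : p.1 = p.2
  · apply ContinuousAt.continuousWithinAt
    have := rho_tendsto_diag h1
    have hpa : ((p.1, p.1) : ℝ × ℝ) = p := by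
      ext
      · rfl
      · exact hd
    rw [hpa] at this
    simpa [ContinuousAt, rho, hd] using this
  · apply ContinuousAt.continuousWithinAt
    have hU : IsOpen {q : ℝ × ℝ | q.1 ≠ q.2 ∧ 0 < q.1 ∧ 0 < q.2} := by
      refine (isOpen_ne_fun continuous_fst continuous_snd).inter
        ((isOpen_lt continuous_const continuous_fst).inter
          (isOpen_lt continuous_const continuous_snd))
    have hmem : p ∈ {q : ℝ × ℝ | q.1 ≠ q.2 ∧ 0 < q.1 ∧ 0 < q.2} := ⟨hd, h1, h2⟩
    have hcong : (fun q : ℝ × ℝ => rho q.1 q.2) =ᶠ[𝓝 p]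
        fun q : ℝ × ℝ => q.1 * q.2 * (Real.log q.1 - Real.log q.2) / (q.1 - q.2) := by
      filter_upwards [hU.mem_nhds hmem] with q hq
      simp [rho, if_neg hq.1]
    rw [continuousAt_congr hcong]
    have hca : ContinuousAt (fun q : ℝ × ℝ =>
        q.1 * q.2 * (Real.log q.1 - Real.log q.2) / (q.1 - q.2)) p := by
      apply ContinuousAt.div
      · exact (continuousAt_fst.mul continuousAt_snd).mul
          ((Real.continuousAt_log h1.ne').comp continuousAt_fst |>.sub
            ((Real.continuousAt_log h2.ne').comp continuousAt_snd))
      · exact continuousAt_fst.sub continuousAt_snd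
      · exact sub_ne_zero.mpr hd
    exact hca
end

section
/- The function ρ is monotone increasing: if 0 < x₁ ≤ y₁ and 0 < x₂ ≤ y₂ then ρ(x₁,x₂) ≤ ρ(y₁,y₂). -/
private lemma denom_pos {x y : ℝ} (hx : 0 < x) (hy : 0 < y) {t : ℝ}
    (ht : t ∈ Set.Icc (0:ℝ) 1) : 0 < t / x + (1 - t) / y := by
  obtain ⟨ht0, ht1⟩ := ht
  rcases eq_or_lt_of_le ht0 with h | h
  · simp [← h]; positivity
  · have : 0 ≤ (1 - t) / y := by
      apply div_nonneg (by linarith) hy.le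
    have : 0 < t / x := div_pos h hx
    linarith

private lemma contOn {x y : ℝ} (hx : 0 < x) (hy : 0 < y) :
    ContinuousOn (fun t : ℝ => (t / x + (1 - t) / y)⁻¹) (Set.Icc 0 1) := by
  apply ContinuousOn.inv₀
  · fun_prop
  · intro t ht
    exact (denom_pos hx hy ht).ne'

private lemma integrable {x y : ℝ} (hx : 0 < x) (hy : 0 < y) :
    IntervalIntegrable (fun t : ℝ => (t / x + (1 - t) / y)⁻¹)
      MeasureTheory.volume 0 1 := by
  apply ContinuousOn.intervalIntegrable
  rw [Set.uIcc_of_le (by norm_num : (0:ℝ) ≤ 1)]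
  exact contOn hx hy

private lemma rho_eq {x y : ℝ} (hx : 0 < x) (hy : 0 < y) :
    rho x y = ∫ t in (0:ℝ)..1, (t / x + (1 - t) / y)⁻¹ := by
  rcases eq_or_ne x y with h | h
  · subst h
    have : ∀ t : ℝ, (t / x + (1 - t) / x)⁻¹ = x := by
      intro t
      rw [← add_div]
      ring_nf
      simp [hx.ne']
    simp only [this]
    simp [rho]
  · have hxy : (1:ℝ)/x - 1/y ≠ 0 := by
      rw [sub_ne_zero]
      intro hc
      exact h (by field_simp at hc; linarith)
    have key : ∀ t ∈ Set.uIcc (0:ℝ) 1,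
        HasDerivAt (fun t : ℝ => (1/x - 1/y)⁻¹ * Real.log (t / x + (1 - t) / y))
          ((t / x + (1 - t) / y)⁻¹) t := by
      intro t ht
      rw [Set.uIcc_of_le (by norm_num : (0:ℝ) ≤ 1)] at ht
      have hpos := denom_pos hx hy ht
      have hg : HasDerivAt (fun t : ℝ => t / x + (1 - t) / y) (1/x - 1/y) t := by
        have : HasDerivAt (fun t : ℝ => t * (1/x) + (1 - t) * (1/y)) (1/x - 1/y) t := by
          have h1 : HasDerivAt (fun t : ℝ => t * (1/x)) (1/x) t := by
            simpa using (hasDerivAt_id t).mul_const (1/x)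
          have h2 : HasDerivAt (fun t : ℝ => (1 - t) * (1/y)) (-(1/y)) t := by
            have : HasDerivAt (fun t : ℝ => 1 - t) (-1) t := by
              simpa using (hasDerivAt_id t).const_sub 1
            simpa using this.mul_const (1/y)
          exact (h1.add h2).congr_deriv (by ring)
        simpa [div_eq_mul_inv, one_div] using this
      have hlog := (hg.log hpos.ne').const_mul ((1:ℝ)/x - 1/y)⁻¹
      exact hlog.congr_deriv (by rw [← mul_div_assoc, inv_mul_cancel₀ hxy, one_div])
    rw [intervalIntegral.integral_eq_sub_of_hasDerivAt key (integrable hx hy)]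
    simp only [rho, if_neg h]
    have hxny : x - y ≠ 0 := sub_ne_zero.mpr h
    have hyx : y - x ≠ 0 := fun hc => h (by linarith)
    have hyx' : -x + y ≠ 0 := fun hc => h (by linarith)
    norm_num [Real.log_inv]
    field_simp
    ring

theorem rho_monotone (x₁ y₁ x₂ y₂ : ℝ) (hx₁ : 0 < x₁) (h₁ : x₁ ≤ y₁)
    (hx₂ : 0 < x₂) (h₂ : x₂ ≤ y₂) :
    rho x₁ x₂ ≤ rho y₁ y₂ := by
  have hy₁ : 0 < y₁ := lt_of_lt_of_le hx₁ h₁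
  have hy₂ : 0 < y₂ := lt_of_lt_of_le hx₂ h₂
  rw [rho_eq hx₁ hx₂, rho_eq hy₁ hy₂]
  apply intervalIntegral.integral_mono_on (by norm_num) (integrable hx₁ hx₂)
    (integrable hy₁ hy₂)
  intro t ht
  have hp₁ := denom_pos hy₁ hy₂ ht
  have hp₂ := denom_pos hx₁ hx₂ ht
  apply inv_anti₀ hp₁
  obtain ⟨ht0, ht1⟩ := ht
  gcongr <;> linarith
end

section
/- For positive x and y, ρ(x,y) = y·f(x/y) where f(t) = t·ln(t)/(t-1) for t > 0, t ≠ 1, and f(1) = 1; moreover f is continuous and strictly increasing on (0,∞). -/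
noncomputable def f (t : ℝ) : ℝ :=
  if t = 1 then 1 else t * Real.log t / (t - 1)

lemma f_eventually_eq {t : ℝ} (ht : t ≠ 1) :
    f =ᶠ[nhds t] fun s => s * Real.log s / (s - 1) := by
  filter_upwards [eventually_ne_nhds ht] with s hs
  simp [f, hs]

lemma f_contAt {t : ℝ} (ht0 : 0 < t) (ht : t ≠ 1) : ContinuousAt f t := by
  have hg : ContinuousAt (fun s => s * Real.log s / (s - 1)) t := by
    exact ((continuousAt_id.mul (Real.continuousAt_log ht0.ne')).div
      (continuousAt_id.sub continuousAt_const) (sub_ne_zero.2 ht))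
  exact hg.congr (f_eventually_eq ht).symm

lemma f_tendsto_one : Filter.Tendsto f (nhdsWithin 1 {(1:ℝ)}ᶜ) (nhds 1) := by
  have h := (Real.hasDerivAt_log one_ne_zero)
  rw [hasDerivAt_iff_tendsto_slope] at h
  have h2 : Filter.Tendsto (fun t : ℝ => t * slope Real.log 1 t)
      (nhdsWithin 1 {(1:ℝ)}ᶜ) (nhds (1 * 1⁻¹)) := by
    exact (Filter.tendsto_id.mono_left nhdsWithin_le_nhds).mul h
  simp only [one_mul, inv_one] at h2
  refine h2.congr' ?_
  filter_upwards [self_mem_nhdsWithin] with t (ht : t ≠ 1)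
  rw [f, if_neg ht, slope_def_field]
  rw [Real.log_one, sub_zero, div_eq_mul_inv, div_eq_mul_inv, mul_assoc]

lemma f_contAt_one : ContinuousAt f 1 := by
  rw [← continuousWithinAt_compl_self, ContinuousWithinAt]
  have h1 : f 1 = 1 := by simp [f]
  rw [h1]
  exact f_tendsto_one

lemma f_cont : ContinuousOn f (Set.Ioi (0 : ℝ)) := by
  intro t ht
  rcases eq_or_ne t 1 with rfl | hne
  · exact f_contAt_one.continuousWithinAt
  · exact (f_contAt ht hne).continuousWithinAt

lemma f_hasDeriv {t : ℝ} (ht0 : 0 < t) (ht : t ≠ 1) :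
    HasDerivAt f ((t - 1 - Real.log t) / (t - 1) ^ 2) t := by
  have hu : HasDerivAt (fun s : ℝ => s * Real.log s) (Real.log t + 1) t := by
    have : HasDerivAt (fun s : ℝ => s * Real.log s) (1 * Real.log t + id t * t⁻¹) t :=
      (hasDerivAt_id t).mul (Real.hasDerivAt_log ht0.ne')
    convert this using 1
    simp [ht0.ne']
  have hv : HasDerivAt (fun s : ℝ => s - 1) 1 t := (hasDerivAt_id t).sub_const 1
  have h := hu.div hv (sub_ne_zero.2 ht)
  have heq : ((Real.log t + 1) * (t - 1) - t * Real.log t * 1) / (t - 1) ^ 2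
      = (t - 1 - Real.log t) / (t - 1) ^ 2 := by ring_nf
  rw [heq] at h
  exact h.congr_of_eventuallyEq (f_eventually_eq ht)

lemma f_deriv_pos {t : ℝ} (ht0 : 0 < t) (ht : t ≠ 1) : 0 < deriv f t := by
  rw [(f_hasDeriv ht0 ht).deriv]
  apply div_pos
  · linarith [Real.log_lt_sub_one_of_pos ht0 ht]
  · have h1 : t - 1 ≠ 0 := sub_ne_zero.2 ht
    positivity

lemma f_mono_left : StrictMonoOn f (Set.Ioc (0:ℝ) 1) := by
  apply strictMonoOn_of_deriv_pos (convex_Ioc 0 1)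
    (f_cont.mono (fun x hx => hx.1))
  intro x hx
  rw [interior_Ioc] at hx
  exact f_deriv_pos hx.1 hx.2.ne

lemma f_mono_right : StrictMonoOn f (Set.Ici (1:ℝ)) := by
  apply strictMonoOn_of_deriv_pos (convex_Ici 1)
    (f_cont.mono (fun x hx => Set.mem_Ioi.2 (lt_of_lt_of_le one_pos (Set.mem_Ici.1 hx))))
  intro x hx
  rw [interior_Ici] at hx
  exact f_deriv_pos (lt_trans one_pos hx) hx.ne'

theorem rho_eq_f_and_f_props :
    (∀ x y : ℝ, 0 < x → 0 < y → rho x y = y * f (x / y)) ∧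
    ContinuousOn f (Set.Ioi (0 : ℝ)) ∧
    StrictMonoOn f (Set.Ioi (0 : ℝ)) := by
  refine ⟨?_, f_cont, ?_⟩
  · intro x y hx hy
    rcases eq_or_ne x y with rfl | hne
    · simp [rho, f, div_self hy.ne']
    · have hdiv : x / y ≠ 1 := by
        exact fun h => hne ((div_eq_one_iff_eq hy.ne').1 h)
      rw [rho, f, if_neg hne, if_neg hdiv, Real.log_div hx.ne' hy.ne']
      field_simp
  · intro a ha b hb hab
    rcases le_or_gt b 1 with hb1 | hb1
    · exact f_mono_left ⟨ha, le_of_lt (lt_of_lt_of_le hab hb1)⟩ ⟨hb, hb1⟩ hab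
    · rcases le_or_gt a 1 with ha1 | ha1
      · calc f a ≤ f 1 := by
              rcases eq_or_lt_of_le ha1 with rfl | ha1'
              · exact le_refl _
              · exact le_of_lt (f_mono_left ⟨ha, ha1⟩ ⟨one_pos, le_refl _⟩ ha1')
          _ < f b := f_mono_right (Set.mem_Ici.2 (le_refl _)) (le_of_lt hb1) hb1
      · exact f_mono_right (le_of_lt ha1) (le_of_lt (lt_trans ha1 hab)) hab
end

section
/- The function t ↦ e^{W₀(t)} is strictly concave on [0,∞), where W₀ is the principal branch of the Lambert W function. -/
theorem expW_strictConcave (W : ℝ → ℝ)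
    (hW0 : ∀ t : ℝ, 0 ≤ t → 0 ≤ W t)
    (hW : ∀ t : ℝ, 0 ≤ t → W t * Real.exp (W t) = t) :
    StrictConcaveOn ℝ (Set.Ici (0 : ℝ)) (fun t => Real.exp (W t)) := by
  set g : ℝ → ℝ := fun y => y * Real.log y with hg
  have hgf : ∀ t : ℝ, 0 ≤ t → g (Real.exp (W t)) = t := by
    intro t ht
    simp only [hg, Real.log_exp]
    rw [mul_comm]; exact hW t ht
  have hgmono : StrictMonoOn g (Set.Ici (1 : ℝ)) := by
    intro p hp q hq hpq
    simp only [Set.mem_Ici] at hp hq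
    have hlp : 0 ≤ Real.log p := Real.log_nonneg hp
    calc p * Real.log p ≤ q * Real.log p := by nlinarith
      _ < q * Real.log q := by
          have := Real.log_lt_log (lt_of_lt_of_le one_pos hp) hpq
          nlinarith
  have hf1 : ∀ t : ℝ, 0 ≤ t → 1 ≤ Real.exp (W t) := fun t ht =>
    Real.one_le_exp (hW0 t ht)
  constructor
  · exact convex_Ici 0
  · intro x hx y hy hxy a b ha hb hab
    simp only [Set.mem_Ici] at hx hy
    simp only [smul_eq_mul]
    have hu : 1 ≤ Real.exp (W x) := hf1 x hx
    have hv : 1 ≤ Real.exp (W y) := hf1 y hy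
    have hux : g (Real.exp (W x)) = x := hgf x hx
    have hvy : g (Real.exp (W y)) = y := hgf y hy
    have huv : Real.exp (W x) ≠ Real.exp (W y) := by
      intro h
      exact hxy (by rw [← hux, ← hvy, h])
    have hconv : g (a • Real.exp (W x) + b • Real.exp (W y)) <
        a • g (Real.exp (W x)) + b • g (Real.exp (W y)) :=
      Real.strictConvexOn_mul_log.2 (Set.mem_Ici.2 (by linarith))
        (Set.mem_Ici.2 (by linarith)) huv ha hb hab
    rw [hux, hvy] at hconv
    simp only [smul_eq_mul] at hconv
    have hs : (0:ℝ) ≤ a * x + b * y := by positivity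
    have key : g (Real.exp (W (a * x + b * y))) = a * x + b * y := hgf _ hs
    by_contra hcon
    push_neg at hcon
    have h1 : 1 ≤ a * Real.exp (W x) + b * Real.exp (W y) := by nlinarith
    have h2 : 1 ≤ Real.exp (W (a * x + b * y)) := hf1 _ hs
    rcases eq_or_lt_of_le hcon with h | h
    · rw [← h, key] at hconv; linarith
    · have := hgmono (Set.mem_Ici.2 h2) (Set.mem_Ici.2 h1) h
      rw [key] at this
      linarith
end

section
/- For all p with 0 < p < 1, it holds that 1 - e^{1 - 1/p} < (4/3)·(1 - p). -/
/-- Lower bound for `exp (-t₀)` at rational points via `(1 - t₀/32)^32`. -/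
lemma exp_neg_lb (t₀ : ℝ) (h0 : 0 ≤ t₀) (h32 : t₀ ≤ 32) :
    (1 - t₀ / 32) ^ 32 ≤ Real.exp (-t₀) := by
  have h1 : Real.exp (-t₀) = Real.exp (-(t₀ / 32)) ^ (32 : ℕ) := by
    rw [← Real.exp_nat_mul]
    ring_nf
  rw [h1]
  have h2 : (1 : ℝ) - t₀ / 32 ≤ Real.exp (-(t₀ / 32)) := by
    have := Real.add_one_le_exp (-(t₀ / 32))
    linarith
  have h3 : (0 : ℝ) ≤ 1 - t₀ / 32 := by linarith
  exact pow_le_pow_left₀ h3 h2 32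

/-- Tangent line bound: `exp (-t) ≥ exp (-t₀) * (1 + t₀ - t)`. -/
lemma exp_neg_tangent (t₀ t : ℝ) :
    Real.exp (-t₀) * (1 + t₀ - t) ≤ Real.exp (-t) := by
  have h1 : (t₀ - t) + 1 ≤ Real.exp (t₀ - t) := Real.add_one_le_exp _
  have h2 : Real.exp (-t₀) * Real.exp (t₀ - t) = Real.exp (-t) := by
    rw [← Real.exp_add]; ring_nf
  have h3 := Real.exp_pos (-t₀)
  nlinarith [h3.le]

lemma key_ineq (t : ℝ) (ht0 : 0 < t) (ht3 : t < 3) :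
    1 - t / 3 < (1 + t) * Real.exp (-t) := by
  have hE := Real.exp_pos (-t)
  rcases lt_or_ge t (1/3) with h1 | h1
  · -- tangent at 0 : exp (-t) ≥ 1 - t
    have ht : (1 : ℝ) - t ≤ Real.exp (-t) := by
      have := Real.add_one_le_exp (-t); linarith
    nlinarith [mul_pos ht0 ht0]
  rcases le_or_gt t (4/5) with h2 | h2
  · -- tangent at 1/2, exp(-1/2) ≥ 0.604
    have hc : (0.604 : ℝ) ≤ Real.exp (-(1/2 : ℝ)) := by
      have := exp_neg_lb (1/2) (by norm_num) (by norm_num)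
      nlinarith [this]
    have htan := exp_neg_tangent (1/2) t
    have hlin : (0.604 : ℝ) * (1 + 1/2 - t) ≤ Real.exp (-t) := by
      have hpos : (0 : ℝ) ≤ 1 + 1/2 - t := by linarith
      nlinarith [mul_le_mul_of_nonneg_right hc hpos]
    nlinarith [mul_nonneg (by linarith : (0:ℝ) ≤ t - 1/3) (by linarith : (0:ℝ) ≤ 4/5 - t)]
  rcases le_or_gt t (5/4) with h3 | h3
  · -- tangent at 1, exp(-1) ≥ 0.362
    have hc : (0.362 : ℝ) ≤ Real.exp (-(1 : ℝ)) := by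
      have := exp_neg_lb 1 (by norm_num) (by norm_num)
      nlinarith [this]
    have htan := exp_neg_tangent 1 t
    have hlin : (0.362 : ℝ) * (1 + 1 - t) ≤ Real.exp (-t) := by
      have hpos : (0 : ℝ) ≤ 1 + 1 - t := by linarith
      nlinarith [mul_le_mul_of_nonneg_right hc hpos]
    nlinarith [mul_nonneg (by linarith : (0:ℝ) ≤ t - 4/5) (by linarith : (0:ℝ) ≤ 5/4 - t)]
  rcases le_or_gt t (9/5) with h4 | h4
  · -- tangent at 3/2, exp(-3/2) ≥ 0.215
    have hc : (0.215 : ℝ) ≤ Real.exp (-(3/2 : ℝ)) := by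
      have := exp_neg_lb (3/2) (by norm_num) (by norm_num)
      nlinarith [this]
    have htan := exp_neg_tangent (3/2) t
    have hlin : (0.215 : ℝ) * (1 + 3/2 - t) ≤ Real.exp (-t) := by
      have hpos : (0 : ℝ) ≤ 1 + 3/2 - t := by linarith
      nlinarith [mul_le_mul_of_nonneg_right hc hpos]
    nlinarith [mul_nonneg (by linarith : (0:ℝ) ≤ t - 5/4) (by linarith : (0:ℝ) ≤ 9/5 - t)]
  · -- tangent at 2, exp(-2) ≥ 0.1267
    have hc : (0.1267 : ℝ) ≤ Real.exp (-(2 : ℝ)) := by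
      have := exp_neg_lb 2 (by norm_num) (by norm_num)
      nlinarith [this]
    have htan := exp_neg_tangent 2 t
    have hlin : (0.1267 : ℝ) * (1 + 2 - t) ≤ Real.exp (-t) := by
      have hpos : (0 : ℝ) ≤ 1 + 2 - t := by linarith
      nlinarith [mul_le_mul_of_nonneg_right hc hpos]
    nlinarith [mul_nonneg (by linarith : (0:ℝ) ≤ t - 9/5) (by linarith : (0:ℝ) ≤ 3 - t)]

theorem ineq_two (p : ℝ) (hp0 : 0 < p) (hp1 : p < 1) :
    1 - Real.exp (1 - 1 / p) < 4 / 3 * (1 - p) := by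
  rcases le_or_gt p (1/4) with hp | hp
  · have := Real.exp_pos (1 - 1/p)
    nlinarith
  · have ht0 : 0 < 1/p - 1 := by
      have : 1 < 1/p := (one_lt_one_div hp0 hp1)
      linarith
    have ht3 : 1/p - 1 < 3 := by
      have : 1/p < 4 := by
        rw [div_lt_iff₀ hp0]; linarith
      linarith
    have h1 := key_ineq (1/p - 1) ht0 ht3
    have h2 : (1 + (1/p - 1)) = 1/p := by ring
    have h4 : -(1/p - 1) = 1 - 1/p := by ring
    rw [h2, h4] at h1
    -- h1 : 1 - (1/p - 1)/3 < (1/p) * exp (1 - 1/p)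
    have h5 : p * (1 - (1/p - 1)/3) < p * (1/p * Real.exp (1 - 1/p)) :=
      (mul_lt_mul_iff_right₀ hp0).2 h1
    have h6 : p * (1/p * Real.exp (1 - 1/p)) = Real.exp (1 - 1/p) := by
      field_simp
    have h7 : p * (1 - (1/p - 1)/3) = p - (1 - p)/3 := by
      field_simp
    rw [h6, h7] at h5
    linarith
end

section
/- Let P = [[p, 1-p],[1-p, p]] with 0 < p < 1 and Q(k) = k·(P - I) for the 2×2 identity I. Then ‖P - exp(Q(1/p))‖_∞ < ‖P - exp(Q(ln(p)/(p-1)))‖_∞, where ‖·‖_∞ is the maximum absolute row sum norm. -/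
open Matrix

noncomputable def rowSumNorm (M : Matrix (Fin 2) (Fin 2) ℝ) : ℝ :=
  max (|M 0 0| + |M 0 1|) (|M 1 0| + |M 1 1|)

lemma exp_sA (s : ℝ) :
    NormedSpace.exp (s • (!![(-1:ℝ), 1; 1, -1])) =
      !![(1 + Real.exp (-2*s))/2, (1 - Real.exp (-2*s))/2;
         (1 - Real.exp (-2*s))/2, (1 + Real.exp (-2*s))/2] := by
  set U : Matrix (Fin 2) (Fin 2) ℝ := !![1, 1; 1, -1] with hUdef
  have hdet : U.det = -2 := by simp [hUdef, Matrix.det_fin_two_of]; norm_num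
  have hU : IsUnit U := by
    rw [Matrix.isUnit_iff_isUnit_det, hdet]; norm_num
  have hUinv : U⁻¹ = !![(1:ℝ)/2, 1/2; 1/2, -(1/2)] := by
    apply Matrix.inv_eq_right_inv
    ext i j
    fin_cases i <;> fin_cases j <;>
      simp [hUdef, Matrix.mul_apply, Fin.sum_univ_two] <;> norm_num
  have key : s • (!![(-1:ℝ), 1; 1, -1]) = U * Matrix.diagonal ![0, -2*s] * U⁻¹ := by
    rw [hUinv]
    ext i j
    fin_cases i <;> fin_cases j <;>
      simp [hUdef, Matrix.mul_apply, Fin.sum_univ_two, Matrix.diagonal_apply, Matrix.vecMul_diagonal,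
        Matrix.vecHead, Matrix.vecTail] <;> ring
  rw [key, Matrix.exp_conj U (Matrix.diagonal ![0, -2*s]) hU, Matrix.exp_diagonal, hUinv]
  ext i j
  fin_cases i <;> fin_cases j <;>
    simp [hUdef, Matrix.mul_apply, Fin.sum_univ_two, Matrix.diagonal_apply, Matrix.vecMul_diagonal,
      Matrix.vecHead, Matrix.vecTail, ← Real.exp_eq_exp_ℝ, Pi.exp_def, Real.exp_zero] <;>
    ring

lemma rsn (p x : ℝ) :
    rowSumNorm (!![p, 1-p; 1-p, p]
      - !![(1+x)/2, (1-x)/2; (1-x)/2, (1+x)/2]) = |1 - 2*p + x| := by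
  unfold rowSumNorm
  norm_num [Matrix.sub_apply]
  have e1 : p - (1+x)/2 = -((1 - 2*p + x)/2) := by ring
  have e2 : 1 - p - (1-x)/2 = (1 - 2*p + x)/2 := by ring
  rw [e1, e2, abs_neg, add_comm (|(1 - 2*p + x)/2|) (|(1 - 2*p + x)/2|), max_self]
  rw [abs_div, abs_two]
  ring

theorem two_by_two_compare (p : ℝ) (hp0 : 0 < p) (hp1 : p < 1) :
    rowSumNorm (!![p, 1 - p; 1 - p, p]
        - NormedSpace.exp ((1 / p) • (!![p, 1 - p; 1 - p, p] - (1 : Matrix (Fin 2) (Fin 2) ℝ))))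
      < rowSumNorm (!![p, 1 - p; 1 - p, p]
        - NormedSpace.exp ((Real.log p / (p - 1)) • (!![p, 1 - p; 1 - p, p] - (1 : Matrix (Fin 2) (Fin 2) ℝ)))) := by
  have hp : p ≠ 0 := ne_of_gt hp0
  have hup : (0:ℝ) < (1-p)/p := div_pos (by linarith) hp0
  have h1 : (1 / p) • (!![p, 1 - p; 1 - p, p] - (1 : Matrix (Fin 2) (Fin 2) ℝ))
      = ((1-p)/p) • (!![(-1:ℝ), 1; 1, -1]) := by
    ext i j
    fin_cases i <;> fin_cases j <;>
      simp [Matrix.sub_apply, Matrix.one_apply] <;> field_simp <;> ring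
  have h2 : (Real.log p / (p - 1)) • (!![p, 1 - p; 1 - p, p] - (1 : Matrix (Fin 2) (Fin 2) ℝ))
      = (-Real.log p) • (!![(-1:ℝ), 1; 1, -1]) := by
    have hp1' : p - 1 ≠ 0 := by intro h; nlinarith
    ext i j
    fin_cases i <;> fin_cases j <;>
      simp [Matrix.sub_apply, Matrix.one_apply] <;> field_simp <;> ring
  have he2 : Real.exp (-2 * -Real.log p) = p^2 := by
    rw [show (-2 : ℝ) * -Real.log p = Real.log p + Real.log p by ring, Real.exp_add,
      Real.exp_log hp0]; ring
  rw [h1, h2, exp_sA, exp_sA, he2, rsn, rsn]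
  set t := Real.exp (-2 * ((1-p)/p)) with ht
  have ht0 : 0 < t := Real.exp_pos _
  have hlogp : (p - 1)/p < Real.log p := by
    have h := Real.add_one_lt_exp (x := (1-p)/p) hup.ne'
    have hgt : 1/p < Real.exp ((1-p)/p) := by
      have h' : (1-p)/p + 1 = 1/p := by field_simp; ring
      linarith
    have hlt := Real.log_lt_log (by positivity : (0:ℝ) < 1/p) hgt
    rw [Real.log_exp, Real.log_div one_ne_zero hp, Real.log_one] at hlt
    have h'' : (p-1)/p = -((1-p)/p) := by ring
    rw [h'']; linarith
  have ht1 : t < p^2 := by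
    rw [ht, ← he2]
    apply Real.exp_lt_exp.mpr
    have h' : -2*((1-p)/p) = 2*((p-1)/p) := by ring
    rw [h']; linarith
  have ht2 : 2*p - 1 - (1-p)^2 < t := by
    rcases le_or_gt p (1/2) with hc | hc
    · nlinarith
    · have hq : (0:ℝ) < (2*p-1)/p := div_pos (by linarith) hp0
      have hx : (2*p-1)/p < Real.exp (-((1-p)/p)) := by
        have h := Real.add_one_lt_exp (x := -((1-p)/p)) (by linarith : -((1-p)/p) < 0).ne
        calc (2*p-1)/p = -((1-p)/p) + 1 := by field_simp; ring
          _ < _ := h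
      have hts : Real.exp (-((1-p)/p))^2 = t := by
        rw [ht, sq, ← Real.exp_add]; congr 1; ring
      have hsq : ((2*p-1)/p)^2 < t := by
        rw [← hts]
        exact pow_lt_pow_left₀ hx hq.le (by norm_num)
      have h2' : 2*p - 1 - (1-p)^2 ≤ ((2*p-1)/p)^2 := by
        rw [div_pow, le_div_iff₀ (by positivity)]
        nlinarith [sq_nonneg ((p-1)^2)]
      linarith
  have hr : |1 - 2*p + p^2| = (1-p)^2 := by
    rw [abs_of_nonneg (by nlinarith)]; ring
  rw [hr, abs_lt]
  constructor <;> nlinarith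
end

section
/- Let 0 < p < 1. Then (1/2)(1 - e^{1-1/p})² < (1 - p)². -/
/-- Auxiliary polynomial inequality (global, via SOS certificate). -/
lemma sq_ineq_aux (p : ℝ) :
    100 * ((13*p-1) * (127*p^2-20*p+1) * (43*p^2-8*p+1)) ≤ 6485184 * p ^ 6 := by
  nlinarith [sq_nonneg (-(51329:ℝ)/10000 + 861279/5000*p - 871173/625*p^2 + 3183253/1250*p^3),
    sq_nonneg ((85821:ℝ)/10000 - 84902/625*p + 1014499/2500*p^2),
    sq_nonneg p, sq_nonneg (p^2), sq_nonneg (p^3), sq_nonneg (1-p), sq_nonneg (p-p^2),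
    sq_nonneg (p^2-p^3), sq_nonneg (p-p^3), sq_nonneg (1-p^2), sq_nonneg (1-p^3),
    sq_nonneg (1+p), sq_nonneg (p+p^2), sq_nonneg (p^2+p^3), sq_nonneg (p+p^3)]

theorem sq_ineq (p : ℝ) (hp0 : 0 < p) (hp1 : p < 1) :
    1 / 2 * (1 - Real.exp (1 - 1 / p)) ^ 2 < (1 - p) ^ 2 := by
  have hinv : 1 < 1 / p := (one_lt_div hp0).mpr hp1
  have hx : 1 - 1 / p < 0 := by linarith
  have hexp_pos : 0 < Real.exp (1 - 1 / p) := Real.exp_pos _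
  have hexp_lt1 : Real.exp (1 - 1 / p) < 1 := Real.exp_lt_one_iff.mpr hx
  rcases le_or_gt p (1 / 6) with h | h
  · have h1p : 5 / 6 ≤ 1 - p := by linarith
    nlinarith
  · -- p > 1/6, so 1/p < 6 and x := 1 - 1/p ∈ (-5, 0)
    have hinv6 : 1 / p < 6 := (div_lt_iff₀ hp0).mpr (by linarith)
    set x := 1 - 1 / p with hxdef
    have hbpos : 0 < 1 + x / 6 := by rw [hxdef]; linarith
    have hstep : x / 6 + 1 < Real.exp (x / 6) :=
      Real.add_one_lt_exp (ne_of_lt (by linarith))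
    have hpow : (1 + x / 6) ^ 6 < Real.exp x := by
      have h6 : Real.exp x = (Real.exp (x / 6)) ^ 6 := by
        rw [← Real.exp_nat_mul]; norm_num; ring_nf
      rw [h6]
      exact pow_lt_pow_left₀ (by linarith) (le_of_lt hbpos) (by norm_num)
    have hE : 0 < 1 - Real.exp x := by linarith
    have hfact : 1 - (1 + x / 6) ^ 6
        = (1 - p) * ((13*p-1) * (127*p^2-20*p+1) * (43*p^2-8*p+1)) / (46656 * p ^ 6) := by
      rw [hxdef]
      field_simp
      ring
    have hp6 : (0:ℝ) < 46656 * p ^ 6 := by positivity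
    have hB : 1 - Real.exp x < 139 / 100 * (1 - p) := by
      have h1 : 1 - Real.exp x < 1 - (1 + x / 6) ^ 6 := by linarith
      have h2 : 1 - (1 + x / 6) ^ 6 ≤ 139 / 100 * (1 - p) := by
        rw [hfact, div_le_iff₀ hp6]
        have hq := sq_ineq_aux p
        nlinarith [mul_le_mul_of_nonneg_left hq (le_of_lt (sub_pos.mpr hp1))]
      linarith
    nlinarith [hB, hE, sq_nonneg (1 - p)]
end
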